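/- Main theorem, quasi-conjunction case: for events E1, H1, E2, H2, E3, H3 with P(Hi) > 0 for i = 1, 2, 3, if QC(E1|H1, E2|H2) ⊑ E3|H3 in the sense of Goodman–Nguyen (i.e., Q∩(H1∪H2) ⊆ E3∩H3 and E3ᶜ∩H3 ⊆ Qᶜ∩(H1∪H2)), then the triple conjunction satisfies C3(ω) = C12(ω) for every ω ∈ Ω (where C12 := ⟦(E1|H1)∧(E2|H2)⟧) and x123 = x12; consequently, if x12 > 0, the iterated conditional satisfies ⟦(E3|H3)|((E1|H1)∧(E2|H2))⟧(ω) = 1 for every ω ∈ Ω. -/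

import Mathlib

open MeasureTheory Set
open scoped Classical

noncomputable section

variable {Ω : Type*} [MeasurableSpace Ω]

/-- Indicator (with values in `ℝ`) of a set. -/
def ind (A : Set Ω) : Ω → ℝ := A.indicator 1

/-- Conditional probability `P(A|H) = P(A ∩ H)/P(H)`. -/
def condProb (P : Measure Ω) (A H : Set Ω) : ℝ :=
  (P (A ∩ H)).toReal / (P H).toReal

/-- The (indicator of the) conditional event `A|H`,
`⟦A|H⟧ = 1_{A∩H} + P(A|H)·1_{Hᶜ}`. -/
def condEvent (P : Measure Ω) (A H : Set Ω) : Ω → ℝ :=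
  fun ω => ind (A ∩ H) ω + condProb P A H * ind Hᶜ ω

/-- The prevision `z` of the conjunction `(A|H) ∧ (B|K)`:
`z = E[min(⟦A|H⟧, ⟦B|K⟧)·1_{H∪K}]/P(H∪K)`. -/
def conjPrev (P : Measure Ω) (A H B K : Set Ω) : ℝ :=
  (∫ ω, min (condEvent P A H ω) (condEvent P B K ω) * ind (H ∪ K) ω ∂P) /
    (P (H ∪ K)).toReal

/-- The conjunction `⟦(A|H) ∧ (B|K)⟧ = min(⟦A|H⟧, ⟦B|K⟧)·1_{H∪K} + z·1_{(H∪K)ᶜ}`. -/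
def conjCE (P : Measure Ω) (A H B K : Set Ω) : Ω → ℝ :=
  fun ω => min (condEvent P A H ω) (condEvent P B K ω) * ind (H ∪ K) ω
    + conjPrev P A H B K * ind (H ∪ K)ᶜ ω

/-- The iterated conditional `⟦(B|K)|(A|H)⟧ = ⟦(A|H)∧(B|K)⟧ + μ·(1 − ⟦A|H⟧)`,
with `μ = z / P(A|H)`. -/
def iterCond (P : Measure Ω) (A H B K : Set Ω) : Ω → ℝ :=
  fun ω => conjCE P A H B K ω +
    (conjPrev P A H B K / condProb P A H) * (1 - condEvent P A H ω)

/-- Goodman–Nguyen logical implication between conditional events: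
`A|H ⊑ B|K` iff `A∩H ⊆ B∩K` and `Bᶜ∩K ⊆ Aᶜ∩H`. -/
def GNle (A H B K : Set Ω) : Prop := A ∩ H ⊆ B ∩ K ∧ Bᶜ ∩ K ⊆ Aᶜ ∩ H

/-- Triple conjunction `⟦(E1|H1)∧(E2|H2)∧(E3|H3)⟧`, defined piecewise, except that
on `H1ᶜ∩H2ᶜ∩H3ᶜ` it is set to `0` (it is irrelevant there for computing `x123`). -/
def c3base (P : Measure Ω) (E1 H1 E2 H2 E3 H3 : Set Ω) : Ω → ℝ := fun ω =>
  if ω ∈ E1 ∩ H1 ∩ (E2 ∩ H2) ∩ (E3 ∩ H3) then 1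
  else if ω ∈ (E1ᶜ ∩ H1) ∪ (E2ᶜ ∩ H2) ∪ (E3ᶜ ∩ H3) then 0
  else if ω ∈ H1ᶜ ∩ (E2 ∩ H2) ∩ (E3 ∩ H3) then condProb P E1 H1
  else if ω ∈ H2ᶜ ∩ (E1 ∩ H1) ∩ (E3 ∩ H3) then condProb P E2 H2
  else if ω ∈ H3ᶜ ∩ (E1 ∩ H1) ∩ (E2 ∩ H2) then condProb P E3 H3
  else if ω ∈ H1ᶜ ∩ H2ᶜ ∩ (E3 ∩ H3) then conjPrev P E1 H1 E2 H2
  else if ω ∈ H1ᶜ ∩ H3ᶜ ∩ (E2 ∩ H2) then conjPrev P E1 H1 E3 H3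
  else if ω ∈ H2ᶜ ∩ H3ᶜ ∩ (E1 ∩ H1) then conjPrev P E2 H2 E3 H3
  else 0

/-- The prevision `x123 = E[C3·1_{H1∪H2∪H3}]/P(H1∪H2∪H3)` of the triple conjunction. -/
def x123 (P : Measure Ω) (E1 H1 E2 H2 E3 H3 : Set Ω) : ℝ :=
  (∫ ω, c3base P E1 H1 E2 H2 E3 H3 ω * ind (H1 ∪ H2 ∪ H3) ω ∂P) /
    (P (H1 ∪ H2 ∪ H3)).toReal

/-- The triple conjunction `C3 = ⟦(E1|H1)∧(E2|H2)∧(E3|H3)⟧`, equal to `x123` on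
`H1ᶜ∩H2ᶜ∩H3ᶜ` and given piecewise by `c3base` elsewhere. -/
def c3 (P : Measure Ω) (E1 H1 E2 H2 E3 H3 : Set Ω) : Ω → ℝ := fun ω =>
  if ω ∈ H1ᶜ ∩ H2ᶜ ∩ H3ᶜ then x123 P E1 H1 E2 H2 E3 H3
  else c3base P E1 H1 E2 H2 E3 H3 ω

/-- The iterated conditional `⟦(E3|H3)|((E1|H1)∧(E2|H2))⟧ = C3 + μ·(1 − C12)`,
where `μ = x123/x12` and `C12 = ⟦(E1|H1)∧(E2|H2)⟧`. -/
def iter3 (P : Measure Ω) (E1 H1 E2 H2 E3 H3 : Set Ω) : Ω → ℝ := fun ω =>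
  c3 P E1 H1 E2 H2 E3 H3 ω +
    (x123 P E1 H1 E2 H2 E3 H3 / conjPrev P E1 H1 E2 H2) *
      (1 - conjCE P E1 H1 E2 H2 ω)

/-- The event `Q` of the quasi conjunction `QC(E1|H1, E2|H2) = Q|(H1∪H2)`. -/
def qcQ (E1 H1 E2 H2 : Set Ω) : Set Ω := (H1ᶜ ∪ (E1 ∩ H1)) ∩ (H2ᶜ ∪ (E2 ∩ H2))


section Helpers

variable {Ω : Type*} [MeasurableSpace Ω]

lemma ind_of_mem {S : Set Ω} {ω : Ω} (h : ω ∈ S) : ind S ω = 1 := by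
  simp [ind, Set.indicator_of_mem h]

lemma ind_of_not_mem {S : Set Ω} {ω : Ω} (h : ω ∉ S) : ind S ω = 0 := by
  simp [ind, Set.indicator_of_notMem h]

lemma ind_nonneg (S : Set Ω) (ω : Ω) : 0 ≤ ind S ω := by
  by_cases h : ω ∈ S
  · rw [ind_of_mem h]; norm_num
  · rw [ind_of_not_mem h]

lemma ind_le_one (S : Set Ω) (ω : Ω) : ind S ω ≤ 1 := by
  by_cases h : ω ∈ S
  · rw [ind_of_mem h]
  · rw [ind_of_not_mem h]; norm_num

lemma condProb_nonneg (P : Measure Ω) (A H : Set Ω) : 0 ≤ condProb P A H :=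
  div_nonneg ENNReal.toReal_nonneg ENNReal.toReal_nonneg

lemma condProb_le_one (P : Measure Ω) [IsFiniteMeasure P] (A H : Set Ω) :
    condProb P A H ≤ 1 := by
  rcases eq_or_lt_of_le (ENNReal.toReal_nonneg : (0:ℝ) ≤ (P H).toReal) with h | h
  · simp [condProb, ← h]
  · rw [condProb, div_le_one h]
    exact ENNReal.toReal_mono (measure_ne_top P _)
      (measure_mono Set.inter_subset_right)

lemma ce_mem_mem {P : Measure Ω} {A H : Set Ω} {ω : Ω} (hH : ω ∈ H) (hA : ω ∈ A) :
    condEvent P A H ω = 1 := by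
  have h1 : ω ∈ A ∩ H := ⟨hA, hH⟩
  have h2 : ω ∉ Hᶜ := fun hc => hc hH
  simp [condEvent, ind_of_mem h1, ind_of_not_mem h2]

lemma ce_mem_not {P : Measure Ω} {A H : Set Ω} {ω : Ω} (hH : ω ∈ H) (hA : ω ∉ A) :
    condEvent P A H ω = 0 := by
  have h1 : ω ∉ A ∩ H := fun hc => hA hc.1
  have h2 : ω ∉ Hᶜ := fun hc => hc hH
  simp [condEvent, ind_of_not_mem h1, ind_of_not_mem h2]

lemma ce_not {P : Measure Ω} {A H : Set Ω} {ω : Ω} (hH : ω ∉ H) :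
    condEvent P A H ω = condProb P A H := by
  have h1 : ω ∉ A ∩ H := fun hc => hH hc.2
  have h2 : ω ∈ Hᶜ := hH
  simp [condEvent, ind_of_not_mem h1, ind_of_mem h2]

lemma ce_nonneg (P : Measure Ω) (A H : Set Ω) (ω : Ω) : 0 ≤ condEvent P A H ω :=
  add_nonneg (ind_nonneg _ _) (mul_nonneg (condProb_nonneg P A H) (ind_nonneg _ _))

lemma ce_le_one (P : Measure Ω) [IsFiniteMeasure P] (A H : Set Ω) (ω : Ω) :
    condEvent P A H ω ≤ 1 := by
  by_cases hH : ω ∈ H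
  · by_cases hA : ω ∈ A
    · rw [ce_mem_mem hH hA]
    · rw [ce_mem_not hH hA]; norm_num
  · rw [ce_not hH]; exact condProb_le_one P A H

lemma measurable_ind {S : Set Ω} (hS : MeasurableSet S) : Measurable (ind S) :=
  measurable_one.indicator hS

lemma measurable_ce (P : Measure Ω) {A H : Set Ω} (hA : MeasurableSet A)
    (hH : MeasurableSet H) : Measurable (condEvent P A H) :=
  (measurable_ind (hA.inter hH)).add ((measurable_ind hH.compl).const_mul _)

lemma integrable_of_bdd {P : Measure Ω} [IsFiniteMeasure P] {f : Ω → ℝ} {C : ℝ}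
    (hm : Measurable f) (hb : ∀ ω, |f ω| ≤ C) : Integrable f P :=
  ⟨hm.aestronglyMeasurable,
    MeasureTheory.HasFiniteIntegral.of_bounded (C := C)
      (Filter.Eventually.of_forall (by simpa [Real.norm_eq_abs] using hb))⟩

lemma integral_ind (P : Measure Ω) {S : Set Ω} (hS : MeasurableSet S) :
    ∫ ω, ind S ω ∂P = (P S).toReal := by
  simpa [ind, Measure.real] using MeasureTheory.integral_indicator_one (μ := P) hS

end Helpers

/-- Main theorem, quasi-conjunction case `QC(E1|H1, E2|H2) ⊑ E3|H3`
(Goodman–Nguyen): the triple conjunction `C3` coincides pointwise with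
`C12 = ⟦(E1|H1)∧(E2|H2)⟧` and `x123 = x12`; consequently, if `x12 > 0`, the
iterated conditional `⟦(E3|H3)|((E1|H1)∧(E2|H2))⟧` is constantly `1`. -/
theorem main_case_QC (P : Measure Ω) [IsProbabilityMeasure P]
    (E1 H1 E2 H2 E3 H3 : Set Ω)
    (hE1 : MeasurableSet E1) (hH1 : MeasurableSet H1)
    (hE2 : MeasurableSet E2) (hH2 : MeasurableSet H2)
    (hE3 : MeasurableSet E3) (hH3 : MeasurableSet H3)
    (h1 : 0 < P H1) (h2 : 0 < P H2) (h3 : 0 < P H3)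
    (hGN1 : qcQ E1 H1 E2 H2 ∩ (H1 ∪ H2) ⊆ E3 ∩ H3)
    (hGN2 : E3ᶜ ∩ H3 ⊆ (qcQ E1 H1 E2 H2)ᶜ ∩ (H1 ∪ H2)) :
    (∀ ω, c3 P E1 H1 E2 H2 E3 H3 ω = conjCE P E1 H1 E2 H2 ω) ∧
      x123 P E1 H1 E2 H2 E3 H3 = conjPrev P E1 H1 E2 H2 ∧
      (0 < conjPrev P E1 H1 E2 H2 →
        ∀ ω, iter3 P E1 H1 E2 H2 E3 H3 ω = 1) := by
  classical
  -- set-theoretic consequences of the Goodman–Nguyen conditions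
  have hA : E1 ∩ H1 ∩ (E2 ∩ H2) ⊆ E3 ∩ H3 := by
    intro ω hω
    apply hGN1
    simp only [qcQ, Set.mem_inter_iff, Set.mem_union, Set.mem_compl_iff] at hω ⊢
    tauto
  have hC : H1ᶜ ∩ (E2 ∩ H2) ⊆ E3 ∩ H3 := by
    intro ω hω
    apply hGN1
    simp only [qcQ, Set.mem_inter_iff, Set.mem_union, Set.mem_compl_iff] at hω ⊢
    tauto
  have hD : H2ᶜ ∩ (E1 ∩ H1) ⊆ E3 ∩ H3 := by
    intro ω hω
    apply hGN1
    simp only [qcQ, Set.mem_inter_iff, Set.mem_union, Set.mem_compl_iff] at hω ⊢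
    tauto
  have hB : ∀ ω, ω ∈ E3ᶜ ∩ H3 → (ω ∈ E1ᶜ ∩ H1 ∨ ω ∈ E2ᶜ ∩ H2) := by
    intro ω hω
    have h := hGN2 hω
    simp only [qcQ, Set.mem_inter_iff, Set.mem_union, Set.mem_compl_iff] at h ⊢
    tauto
  have hE : ∀ ω, ω ∉ H1 → ω ∉ H2 → ω ∈ H3 → ω ∈ E3 := by
    intro ω h1ω h2ω h3ω
    by_contra hcon
    rcases hB ω ⟨hcon, h3ω⟩ with h | h
    · exact h1ω h.2
    · exact h2ω h.2
  -- pointwise values of c3base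
  have L2 : ∀ ω, ω ∉ H1 → ω ∉ H2 → ω ∈ H3 →
      c3base P E1 H1 E2 H2 E3 H3 ω = conjPrev P E1 H1 E2 H2 := by
    intro ω h1ω h2ω h3ω
    have hE3 : ω ∈ E3 := hE ω h1ω h2ω h3ω
    simp only [c3base, Set.mem_inter_iff, Set.mem_union, Set.mem_compl_iff]
    simp [h1ω, h2ω, h3ω, hE3]
  have x2le := condProb_le_one P E2 H2
  have x1le := condProb_le_one P E1 H1
  have x1nn := condProb_nonneg P E1 H1
  have L1 : ∀ ω, ω ∈ H1 ∪ H2 →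
      c3base P E1 H1 E2 H2 E3 H3 ω
        = min (condEvent P E1 H1 ω) (condEvent P E2 H2 ω) := by
    intro ω hω
    by_cases h1ω : ω ∈ H1
    · by_cases hE1ω : ω ∈ E1
      · by_cases h2ω : ω ∈ H2
        · by_cases hE2ω : ω ∈ E2
          · have h33 : ω ∈ E3 ∩ H3 := hA ⟨⟨hE1ω, h1ω⟩, hE2ω, h2ω⟩
            rw [ce_mem_mem h1ω hE1ω, ce_mem_mem h2ω hE2ω, min_self]
            simp only [c3base, Set.mem_inter_iff, Set.mem_union, Set.mem_compl_iff]
            simp [h1ω, hE1ω, h2ω, hE2ω, h33.1, h33.2]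
          · rw [ce_mem_mem h1ω hE1ω, ce_mem_not h2ω hE2ω,
              min_eq_right (zero_le_one)]
            simp only [c3base, Set.mem_inter_iff, Set.mem_union, Set.mem_compl_iff]
            simp [h1ω, hE1ω, h2ω, hE2ω]
        · have h33 : ω ∈ E3 ∩ H3 := hD ⟨h2ω, hE1ω, h1ω⟩
          rw [ce_mem_mem h1ω hE1ω, ce_not h2ω, min_eq_right x2le]
          simp only [c3base, Set.mem_inter_iff, Set.mem_union, Set.mem_compl_iff]
          simp [h1ω, hE1ω, h2ω, h33.1, h33.2]
      · rw [ce_mem_not h1ω hE1ω, min_eq_left (ce_nonneg P E2 H2 ω)]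
        simp only [c3base, Set.mem_inter_iff, Set.mem_union, Set.mem_compl_iff]
        simp [h1ω, hE1ω]
    · have h2ω : ω ∈ H2 := hω.resolve_left h1ω
      by_cases hE2ω : ω ∈ E2
      · have h33 : ω ∈ E3 ∩ H3 := hC ⟨h1ω, hE2ω, h2ω⟩
        rw [ce_not h1ω, ce_mem_mem h2ω hE2ω, min_eq_left x1le]
        simp only [c3base, Set.mem_inter_iff, Set.mem_union, Set.mem_compl_iff]
        simp [h1ω, h2ω, hE2ω, h33.1, h33.2]
      · rw [ce_not h1ω, ce_mem_not h2ω hE2ω, min_eq_right x1nn]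
        simp only [c3base, Set.mem_inter_iff, Set.mem_union, Set.mem_compl_iff]
        simp [h1ω, h2ω, hE2ω]
  -- measure-theoretic facts
  have hS3 : MeasurableSet (H1ᶜ ∩ H2ᶜ ∩ H3) := (hH1.compl.inter hH2.compl).inter hH3
  have hsubU : H1 ⊆ H1 ∪ H2 ∪ H3 := fun ω h => Or.inl (Or.inl h)
  have hPU : 0 < P (H1 ∪ H2 ∪ H3) := h1.trans_le (measure_mono hsubU)
  have hP12 : 0 < P (H1 ∪ H2) := h1.trans_le (measure_mono Set.subset_union_left)
  have t12 : (P (H1 ∪ H2)).toReal ≠ 0 :=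
    (ENNReal.toReal_pos hP12.ne' (measure_ne_top P _)).ne'
  have tU : (P (H1 ∪ H2 ∪ H3)).toReal ≠ 0 :=
    (ENNReal.toReal_pos hPU.ne' (measure_ne_top P _)).ne'
  -- pointwise decomposition of the integrand
  have hpt : ∀ ω, c3base P E1 H1 E2 H2 E3 H3 ω * ind (H1 ∪ H2 ∪ H3) ω
      = min (condEvent P E1 H1 ω) (condEvent P E2 H2 ω) * ind (H1 ∪ H2) ω
        + conjPrev P E1 H1 E2 H2 * ind (H1ᶜ ∩ H2ᶜ ∩ H3) ω := by
    intro ω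
    by_cases h12 : ω ∈ H1 ∪ H2
    · have hu : ω ∈ H1 ∪ H2 ∪ H3 := Or.inl h12
      have hns : ω ∉ H1ᶜ ∩ H2ᶜ ∩ H3 := by
        intro hc
        rcases h12 with h | h
        · exact hc.1.1 h
        · exact hc.1.2 h
      rw [ind_of_mem h12, ind_of_mem hu, ind_of_not_mem hns, L1 ω h12]
      ring
    · have h1ω : ω ∉ H1 := fun h => h12 (Or.inl h)
      have h2ω : ω ∉ H2 := fun h => h12 (Or.inr h)
      by_cases h3ω : ω ∈ H3
      · have hu : ω ∈ H1 ∪ H2 ∪ H3 := Or.inr h3ω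
        have hs : ω ∈ H1ᶜ ∩ H2ᶜ ∩ H3 := ⟨⟨h1ω, h2ω⟩, h3ω⟩
        rw [ind_of_mem hu, ind_of_mem hs, ind_of_not_mem h12, L2 ω h1ω h2ω h3ω]
        ring
      · have hnu : ω ∉ H1 ∪ H2 ∪ H3 := by
          intro hc
          rcases hc with h | h
          · exact h12 h
          · exact h3ω h
        have hns : ω ∉ H1ᶜ ∩ H2ᶜ ∩ H3 := fun hc => h3ω hc.2
        rw [ind_of_not_mem hnu, ind_of_not_mem h12, ind_of_not_mem hns]
        ring
  -- integrability
  have hm1 : Measurable (fun ω =>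
      min (condEvent P E1 H1 ω) (condEvent P E2 H2 ω) * ind (H1 ∪ H2) ω) :=
    ((measurable_ce P hE1 hH1).min (measurable_ce P hE2 hH2)).mul
      (measurable_ind (hH1.union hH2))
  have hint1 : Integrable (fun ω =>
      min (condEvent P E1 H1 ω) (condEvent P E2 H2 ω) * ind (H1 ∪ H2) ω) P := by
    refine integrable_of_bdd (C := 1) hm1 fun ω => ?_
    have a1 := ce_nonneg P E1 H1 ω
    have a2 := ce_nonneg P E2 H2 ω
    have b1 := ce_le_one P E1 H1 ω
    have i1 := ind_nonneg (H1 ∪ H2) ω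
    have i2 := ind_le_one (H1 ∪ H2) ω
    have m1 : 0 ≤ min (condEvent P E1 H1 ω) (condEvent P E2 H2 ω) := le_min a1 a2
    have m2 : min (condEvent P E1 H1 ω) (condEvent P E2 H2 ω) ≤ 1 :=
      (min_le_left _ _).trans b1
    rw [abs_le]
    constructor <;> nlinarith
  have hint2 : Integrable (fun ω =>
      conjPrev P E1 H1 E2 H2 * ind (H1ᶜ ∩ H2ᶜ ∩ H3) ω) P := by
    refine integrable_of_bdd (C := |conjPrev P E1 H1 E2 H2|)
      ((measurable_ind hS3).const_mul _) fun ω => ?_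
    rw [abs_mul]
    have i1 := ind_nonneg (H1ᶜ ∩ H2ᶜ ∩ H3) ω
    have i2 := ind_le_one (H1ᶜ ∩ H2ᶜ ∩ H3) ω
    have : |ind (H1ᶜ ∩ H2ᶜ ∩ H3) ω| ≤ 1 := abs_le.2 ⟨by linarith, i2⟩
    calc |conjPrev P E1 H1 E2 H2| * |ind (H1ᶜ ∩ H2ᶜ ∩ H3) ω|
        ≤ |conjPrev P E1 H1 E2 H2| * 1 :=
          mul_le_mul_of_nonneg_left this (abs_nonneg _)
      _ = |conjPrev P E1 H1 E2 H2| := mul_one _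
  -- value of the integral
  have hI : (∫ ω, c3base P E1 H1 E2 H2 E3 H3 ω * ind (H1 ∪ H2 ∪ H3) ω ∂P)
      = conjPrev P E1 H1 E2 H2 *
          ((P (H1 ∪ H2)).toReal + (P (H1ᶜ ∩ H2ᶜ ∩ H3)).toReal) := by
    calc (∫ ω, c3base P E1 H1 E2 H2 E3 H3 ω * ind (H1 ∪ H2 ∪ H3) ω ∂P)
        = ∫ ω, (min (condEvent P E1 H1 ω) (condEvent P E2 H2 ω) * ind (H1 ∪ H2) ω
            + conjPrev P E1 H1 E2 H2 * ind (H1ᶜ ∩ H2ᶜ ∩ H3) ω) ∂P :=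
          integral_congr_ae (Filter.Eventually.of_forall hpt)
      _ = (∫ ω, min (condEvent P E1 H1 ω) (condEvent P E2 H2 ω) * ind (H1 ∪ H2) ω ∂P)
            + ∫ ω, conjPrev P E1 H1 E2 H2 * ind (H1ᶜ ∩ H2ᶜ ∩ H3) ω ∂P :=
          integral_add hint1 hint2
      _ = conjPrev P E1 H1 E2 H2 * (P (H1 ∪ H2)).toReal
            + conjPrev P E1 H1 E2 H2 * (P (H1ᶜ ∩ H2ᶜ ∩ H3)).toReal := by
          rw [integral_const_mul, integral_ind P hS3, conjPrev,
            div_mul_cancel₀ _ t12]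
      _ = conjPrev P E1 H1 E2 H2 *
            ((P (H1 ∪ H2)).toReal + (P (H1ᶜ ∩ H2ᶜ ∩ H3)).toReal) := by ring
  -- additivity of the measure over the decomposition
  have hsetU : H1 ∪ H2 ∪ H3 = (H1 ∪ H2) ∪ (H1ᶜ ∩ H2ᶜ ∩ H3) := by
    ext ω
    simp only [Set.mem_union, Set.mem_inter_iff, Set.mem_compl_iff]
    tauto
  have hdisj : Disjoint (H1 ∪ H2) (H1ᶜ ∩ H2ᶜ ∩ H3) := by
    rw [Set.disjoint_left]
    intro ω h hc
    rcases h with h | h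
    · exact hc.1.1 h
    · exact hc.1.2 h
  have haddP : (P (H1 ∪ H2 ∪ H3)).toReal
      = (P (H1 ∪ H2)).toReal + (P (H1ᶜ ∩ H2ᶜ ∩ H3)).toReal := by
    rw [hsetU, measure_union hdisj hS3,
      ENNReal.toReal_add (measure_ne_top P _) (measure_ne_top P _)]
  -- x123 = x12
  have hx : x123 P E1 H1 E2 H2 E3 H3 = conjPrev P E1 H1 E2 H2 := by
    rw [x123, hI, haddP, mul_div_assoc, div_self (haddP ▸ tU), mul_one]
  -- pointwise equality c3 = conjCE
  have part1 : ∀ ω, c3 P E1 H1 E2 H2 E3 H3 ω = conjCE P E1 H1 E2 H2 ω := by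
    intro ω
    by_cases hc : ω ∈ H1ᶜ ∩ H2ᶜ ∩ H3ᶜ
    · have h12 : ω ∉ H1 ∪ H2 := by
        intro h
        rcases h with h | h
        · exact hc.1.1 h
        · exact hc.1.2 h
      rw [c3, if_pos hc, hx, conjCE, ind_of_not_mem h12,
        ind_of_mem (Set.mem_compl h12)]
      ring
    · rw [c3, if_neg hc]
      by_cases h12 : ω ∈ H1 ∪ H2
      · have hnc : ω ∉ (H1 ∪ H2)ᶜ := fun h => h h12
        rw [L1 ω h12, conjCE, ind_of_mem h12, ind_of_not_mem hnc]
        ring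
      · have h1ω : ω ∉ H1 := fun h => h12 (Or.inl h)
        have h2ω : ω ∉ H2 := fun h => h12 (Or.inr h)
        have h3ω : ω ∈ H3 := by
          by_contra h3ω
          exact hc ⟨⟨h1ω, h2ω⟩, h3ω⟩
        rw [L2 ω h1ω h2ω h3ω, conjCE, ind_of_not_mem h12,
          ind_of_mem (Set.mem_compl h12)]
        ring
  refine ⟨part1, hx, fun hpos ω => ?_⟩
  rw [iter3, part1 ω, hx, div_self hpos.ne']
  ring

end
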